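/- Image-size diversity lower bound: for any f : ZMod n → ZMod n and any seed, any contiguous window of length k ≤ n of the state sequence of the counter-assisted generator x_i = f(x_{i-1}) + i contains at least k / |Im(f)| distinct values (i.e., the number ν of distinct values satisfies ν · |Im(f)| ≥ k). -/

import Mathlib

/-- Image-size diversity lower bound. For any `f : ZMod n → ZMod n` and any
seed, any contiguous window of length `k ≤ n` (starting at position `i ≥ 1`) of the state
sequence of the counter-assisted generator `x_i = f (x_{i-1}) + i` contains at least
`k / |Im f|` distinct values: the number `ν` of distinct values satisfies
`ν * |Im f| ≥ k`. -/
theorem stmt_6 (n : ℕ) (hn : 2 ≤ n) [NeZero n] (f : ZMod n → ZMod n)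
    (s : ZMod n) (x : ℕ → ZMod n) (hx0 : x 0 = s)
    (hx : ∀ i, x (i + 1) = f (x i) + ((i + 1 : ℕ) : ZMod n))
    (i : ℕ) (hi : 1 ≤ i) (k : ℕ) (hk1 : 1 ≤ k) (hk2 : k ≤ n) :
    k ≤ ((Finset.range k).image (fun j => x (i + j))).card *
        (Finset.univ.image f).card := by
  classical
  set S := (Finset.range k).image (fun j => x (i + j)) with hS
  have hcount : (Finset.range k).card =
      ∑ v ∈ S, ((Finset.range k).filter (fun j => x (i + j) = v)).card := by
    apply Finset.card_eq_sum_card_fiberwise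
    intro j hj
    exact Finset.mem_image_of_mem _ hj
  have hbound : ∀ v ∈ S,
      ((Finset.range k).filter (fun j => x (i + j) = v)).card ≤
        (Finset.univ.image f).card := by
    intro v hv
    have key : ((Finset.range k).filter (fun j => x (i + j) = v)).card ≤
        ((Finset.univ.image f).image (fun w => v - w)).card := by
      apply Finset.card_le_card_of_injOn (fun j => ((i + j : ℕ) : ZMod n))
      · intro j hj
        simp only [Finset.mem_coe, Finset.mem_filter, Finset.mem_range] at hj
        obtain ⟨hjk, hxv⟩ := hj
        have hij : i + j = (i + j - 1) + 1 := by omega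
        have hstep := hx (i + j - 1)
        rw [← hij] at hstep
        rw [hstep] at hxv
        simp only [Finset.mem_coe, Finset.mem_image]
        refine ⟨f (x (i + j - 1)), ⟨x (i + j - 1), Finset.mem_univ _, rfl⟩, ?_⟩
        rw [← hxv]; ring
      · intro j hj j' hj' hjj
        simp only [Finset.coe_filter, Set.mem_setOf_eq, Finset.mem_range] at hj hj'
        have h1 : (i + j) ≡ (i + j') [MOD n] :=
          (ZMod.natCast_eq_natCast_iff _ _ _).mp hjj
        have h2 : j ≡ j' [MOD n] := Nat.ModEq.add_left_cancel' i h1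
        have hjn : j < n := lt_of_lt_of_le hj.1 hk2
        have hj'n : j' < n := lt_of_lt_of_le hj'.1 hk2
        unfold Nat.ModEq at h2
        rwa [Nat.mod_eq_of_lt hjn, Nat.mod_eq_of_lt hj'n] at h2
    exact key.trans Finset.card_image_le
  calc k = (Finset.range k).card := (Finset.card_range k).symm
    _ = _ := hcount
    _ ≤ ∑ _v ∈ S, (Finset.univ.image f).card := Finset.sum_le_sum hbound
    _ = S.card * (Finset.univ.image f).card := by
        rw [Finset.sum_const, smul_eq_mul]
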